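/- Let (R,m) be a Noetherian local ring, I an ideal, and a ∈ I \ mI an element such that a° is a nonzerodivisor in G(I). Then for all n ≥ 0, aR ∩ I^n = aI^{n-1} (with the convention I^{-1} = R), and consequently mI^n + aI^{n-1} = mI^n + (aR ∩ I^n). -/

import Mathlib

open IsLocalRing

private lemma coeff_mem_of_mem_map {R : Type*} [CommRing R] (I : Ideal R)
    (p : reesAlgebra I) (hp : p ∈ Ideal.map (algebraMap R (reesAlgebra I)) I) :
    ∀ n : ℕ, (p : Polynomial R).coeff n ∈ I ^ (n + 1) := by
  rw [Ideal.map] at hp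
  refine Submodule.span_induction ?_ ?_ ?_ ?_ hp
  · rintro x ⟨c, hc, rfl⟩ n
    show (Polynomial.C c).coeff n ∈ I ^ (n+1)
    rw [Polynomial.coeff_C]
    split
    · subst ‹n = 0›; simpa using hc
    · exact zero_mem _
  · intro n; simp
  · intro x y _ _ hx hy n
    have : ((x + y : reesAlgebra I) : Polynomial R).coeff n =
        (x : Polynomial R).coeff n + (y : Polynomial R).coeff n := by
      push_cast; simp
    rw [this]; exact add_mem (hx n) (hy n)
  · intro q x _ hx n
    rw [smul_eq_mul]
    have : ((q * x : reesAlgebra I) : Polynomial R) =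
        (q : Polynomial R) * (x : Polynomial R) := rfl
    rw [this, Polynomial.coeff_mul]
    refine Submodule.sum_mem _ fun ij hij => ?_
    have h1 : (q : Polynomial R).coeff ij.1 ∈ I ^ ij.1 :=
      (mem_reesAlgebra_iff I (q : Polynomial R)).mp q.2 ij.1
    have h2 : (x : Polynomial R).coeff ij.2 ∈ I ^ (ij.2 + 1) := hx ij.2
    have := Ideal.mul_mem_mul h1 h2
    rw [← pow_add] at this
    have hsum : ij.1 + (ij.2 + 1) = n + 1 := by
      have := Finset.HasAntidiagonal.mem_antidiagonal.mp hij; omega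
    rwa [hsum] at this

private lemma monomial_mem_map {R : Type*} [CommRing R] (I : Ideal R) (k : ℕ) (r : R)
    (hr : r ∈ I ^ (k + 1)) (h : (Polynomial.monomial k r : Polynomial R) ∈ reesAlgebra I) :
    (⟨Polynomial.monomial k r, h⟩ : reesAlgebra I) ∈
      Ideal.map (algebraMap R (reesAlgebra I)) I := by
  rw [pow_succ] at hr
  revert h
  induction hr using Submodule.mul_induction_on' with
  | mem_mul_mem x hx y hy =>
    intro h
    have hxm : (Polynomial.monomial k x : Polynomial R) ∈ reesAlgebra I :=
      reesAlgebra.monomial_mem.mpr hx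
    have heq : (⟨Polynomial.monomial k (x * y), h⟩ : reesAlgebra I) =
        ⟨Polynomial.monomial k x, hxm⟩ * algebraMap R (reesAlgebra I) y := by
      apply Subtype.ext
      show (Polynomial.monomial k (x * y) : Polynomial R) =
        Polynomial.monomial k x * Polynomial.C y
      rw [Polynomial.monomial_mul_C]
    rw [heq]
    exact Ideal.mul_mem_left _ _ (Ideal.mem_map_of_mem _ hy)
  | add x hx y hy ihx ihy =>
    intro h
    have hxm : (Polynomial.monomial k x : Polynomial R) ∈ reesAlgebra I :=
      reesAlgebra.monomial_mem.mpr (Ideal.mul_le_left hx)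
    have hym : (Polynomial.monomial k y : Polynomial R) ∈ reesAlgebra I :=
      reesAlgebra.monomial_mem.mpr (Ideal.mul_le_left hy)
    have heq : (⟨Polynomial.monomial k (x + y), h⟩ : reesAlgebra I) =
        ⟨Polynomial.monomial k x, hxm⟩ + ⟨Polynomial.monomial k y, hym⟩ := by
      apply Subtype.ext
      show (Polynomial.monomial k (x + y) : Polynomial R) = _ + _
      rw [map_add]
    rw [heq]
    exact add_mem (ihx hxm) (ihy hym)

/-- The associated graded ring `G(I) = ⊕ Iⁿ/Iⁿ⁺¹`, realized as `R[It]/I·R[It]`. -/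
noncomputable def assocGraded {R : Type*} [CommRing R] (I : Ideal R) :=
  (reesAlgebra I) ⧸ (Ideal.map (algebraMap R (reesAlgebra I)) I)

noncomputable instance {R : Type*} [CommRing R] (I : Ideal R) : CommRing (assocGraded I) :=
  Ideal.Quotient.commRing _

/-- The class of `b ∈ Iⁿ` in the degree-`n` piece of `G(I)`. -/
noncomputable def gradedClass {R : Type*} [CommRing R] (I : Ideal R) (n : ℕ) (b : R)
    (hb : b ∈ I ^ n) : assocGraded I :=
  Ideal.Quotient.mk _ ⟨Polynomial.monomial n b, reesAlgebra.monomial_mem.mpr hb⟩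

private lemma gradedClass_eq_zero_iff {R : Type*} [CommRing R] (I : Ideal R) (k : ℕ) (r : R)
    (hr : r ∈ I ^ k) : gradedClass I k r hr = 0 ↔ r ∈ I ^ (k + 1) := by
  unfold gradedClass
  refine Iff.trans Ideal.Quotient.eq_zero_iff_mem ?_
  constructor
  · intro h
    have := coeff_mem_of_mem_map I _ h k
    simpa [Polynomial.coeff_monomial] using this
  · intro h
    exact monomial_mem_map I k r h _

private lemma gradedClass_mul {R : Type*} [CommRing R] (I : Ideal R) (k : ℕ) (a r : R)
    (ha : a ∈ I ^ 1) (hr : r ∈ I ^ k) (hm : a * r ∈ I ^ (k + 1)) :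
    gradedClass I 1 a ha * gradedClass I k r hr = gradedClass I (k + 1) (a * r) hm := by
  unfold gradedClass
  have hxy : (⟨Polynomial.monomial 1 a, reesAlgebra.monomial_mem.mpr ha⟩ *
      ⟨Polynomial.monomial k r, reesAlgebra.monomial_mem.mpr hr⟩ : reesAlgebra I) =
      ⟨Polynomial.monomial (k + 1) (a * r), reesAlgebra.monomial_mem.mpr hm⟩ := by
    apply Subtype.ext
    show (Polynomial.monomial 1 a : Polynomial R) * Polynomial.monomial k r = _
    rw [Polynomial.monomial_mul_monomial, add_comm]
  exact congrArg (Ideal.Quotient.mk _) hxy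

/-- if `a ∈ I \ mI` has initial form `a°` a nonzerodivisor in `G(I)`, then
`aR ∩ Iⁿ = aI^{n-1}` for all `n ≥ 0` (with `I^{-1} = R`, i.e. with truncated subtraction),
and consequently `mIⁿ + aI^{n-1} = mIⁿ + (aR ∩ Iⁿ)`. -/
theorem stmt3 {R : Type*} [CommRing R] [IsLocalRing R] [IsNoetherianRing R]
    (I : Ideal R) (a : R) (haI : a ∈ I) (ham : a ∉ maximalIdeal R * I)
    (hcirc : gradedClass I 1 a (by simpa using haI) ∈ nonZeroDivisors (assocGraded I)) :
    ∀ n : ℕ,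
      Ideal.span {a} ⊓ I ^ n = Ideal.span {a} * I ^ (n - 1) ∧
      maximalIdeal R * I ^ n + Ideal.span {a} * I ^ (n - 1) =
        maximalIdeal R * I ^ n + (Ideal.span {a} ⊓ I ^ n) := by
  have step : ∀ (k : ℕ) (r : R), r ∈ I ^ k → a * r ∈ I ^ (k + 2) → r ∈ I ^ (k + 1) := by
    intro k r hrk hms
    have hm : a * r ∈ I ^ (k + 1) :=
      Ideal.pow_le_pow_right (Nat.le_succ _) hms
    have h0 : gradedClass I (k + 1) (a * r) hm = 0 :=
      (gradedClass_eq_zero_iff I (k + 1) (a * r) hm).mpr hms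
    rw [← gradedClass_mul I k a r (by simpa using haI) hrk hm] at h0
    rw [mul_comm] at h0
    have := hcirc.2 _ h0
    exact (gradedClass_eq_zero_iff I k r hrk).mp this
  intro n
  have main : Ideal.span {a} ⊓ I ^ n = Ideal.span {a} * I ^ (n - 1) := by
    apply le_antisymm
    · rintro x ⟨hx1, hx2⟩
      obtain ⟨r, rfl⟩ := Ideal.mem_span_singleton'.mp hx1
      have hr : ∀ k, k ≤ n - 1 → r ∈ I ^ k := by
        intro k hk
        induction k with
        | zero => simp
        | succ m ih =>
          have hm : r ∈ I ^ m := ih (le_trans (Nat.le_succ m) hk)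
          apply step m r hm
          have hle : m + 2 ≤ n := by omega
          have : a * r ∈ I ^ n := by rw [mul_comm a r]; exact hx2
          exact Ideal.pow_le_pow_right hle this
      have : a * r ∈ Ideal.span {a} * I ^ (n - 1) :=
        Ideal.mul_mem_mul (Ideal.mem_span_singleton_self a) (hr (n - 1) le_rfl)
      rw [mul_comm r a]; exact this
    · refine le_inf Ideal.mul_le_left ?_
      cases n with
      | zero => simp
      | succ m =>
        simp only [Nat.succ_sub_one]
        calc Ideal.span {a} * I ^ m ≤ I * I ^ m :=
              Ideal.mul_mono_left ((Ideal.span_singleton_le_iff_mem I).mpr haI)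
          _ = I ^ (m + 1) := (pow_succ' I m).symm
  exact ⟨main, by rw [main]⟩
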